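/- Let x, y ∈ ℂ^n with x ≠ 0. Let i be a random index drawn from the ℓ²-sampling distribution of x (i.e., P(i) = |x_i|²/‖x‖²), and define the complex random variable z = conj(x_i) · y_i · ‖x‖²/|x_i|² (well-defined since only indices with x_i ≠ 0 occur with positive probability). Then E[z] = ⟨x, y⟩ := Σ_{i=1}^n conj(x_i) y_i, and E[|z − ⟨x,y⟩|²] ≤ ‖x‖² · ‖y‖², where ‖·‖ denotes the ℓ²-norm. -/

import Mathlib

lemma aux_div (a b S : ℝ) (ha : a ≠ 0) (hS : S ≠ 0) :
    a / S * (a * b * (S ^ 2 / a ^ 2)) = S * b := by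
  field_simp

/-- For nonzero `x ∈ ℂ^n` and the ℓ²-sampling distribution
`p i = ‖x i‖² / ‖x‖²`, the random variable `z i = conj (x i) * y i * ‖x‖² / ‖x i‖²`
(defined on indices with `x i ≠ 0`, which are the only ones with positive probability)
has expectation `⟨x, y⟩ = ∑ i, conj (x i) * y i` and
`E[|z − ⟨x,y⟩|²] ≤ ‖x‖² ‖y‖²`. -/
theorem stmt0 (n : ℕ) (x y : Fin n → ℂ) (hx : x ≠ 0)
    (p : Fin n → ℝ) (hp : ∀ i, p i = ‖x i‖ ^ 2 / ∑ j, ‖x j‖ ^ 2)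
    (z : Fin n → ℂ)
    (hz : ∀ i, x i ≠ 0 →
      z i = (starRingEnd ℂ) (x i) * y i * (((∑ j, ‖x j‖ ^ 2 : ℝ) : ℂ) / ((‖x i‖ ^ 2 : ℝ) : ℂ))) :
    (∑ i, ((p i : ℝ) : ℂ) * z i) = (∑ i, (starRingEnd ℂ) (x i) * y i) ∧
    (∑ i, p i * ‖z i - ∑ j, (starRingEnd ℂ) (x j) * y j‖ ^ 2) ≤
      (∑ i, ‖x i‖ ^ 2) * (∑ i, ‖y i‖ ^ 2) := by
  set S : ℝ := ∑ j, ‖x j‖ ^ 2 with hSdef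
  obtain ⟨i₀, hi₀⟩ := Function.ne_iff.mp hx
  have hi₀' : x i₀ ≠ 0 := by simpa using hi₀
  have hS : 0 < S := by
    apply Finset.sum_pos' (fun i _ => by positivity)
    refine ⟨i₀, Finset.mem_univ _, ?_⟩
    have := norm_pos_iff.mpr hi₀'
    positivity
  have hSne : S ≠ 0 := ne_of_gt hS
  -- pointwise: p i * z i = conj (x i) * y i
  have hpz : ∀ i, ((p i : ℝ) : ℂ) * z i = (starRingEnd ℂ) (x i) * y i := by
    intro i
    by_cases h : x i = 0
    · simp [hp i, h]
    · have habs : ((‖x i‖ : ℝ) : ℂ) ≠ 0 := by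
        simpa using h
      have hSc : ((S : ℝ) : ℂ) ≠ 0 := by simpa using hSne
      rw [hz i h, hp i]
      push_cast
      field_simp
  have hpsum : ∑ i, p i = 1 := by
    simp only [hp]
    rw [← Finset.sum_div, div_self hSne]
  have part1 : (∑ i, ((p i : ℝ) : ℂ) * z i) = (∑ i, (starRingEnd ℂ) (x i) * y i) :=
    Finset.sum_congr rfl fun i _ => hpz i
  refine ⟨part1, ?_⟩
  set μ : ℂ := ∑ j, (starRingEnd ℂ) (x j) * y j with hμdef
  have hpnn : ∀ i, 0 ≤ p i := fun i => by rw [hp i]; positivity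
  have hnsq : ∀ w : ℂ, ‖w‖ ^ 2 = Complex.normSq w := fun w => by
    rw [Complex.sq_norm]
  -- variance identity
  have hvar : (∑ i, p i * ‖z i - μ‖ ^ 2)
      = (∑ i, p i * Complex.normSq (z i)) - Complex.normSq μ := by
    have hexp : ∀ i, p i * ‖z i - μ‖ ^ 2
        = p i * Complex.normSq (z i) + p i * Complex.normSq μ
          - 2 * (((p i : ℝ) : ℂ) * z i * (starRingEnd ℂ) μ).re := by
      intro i
      rw [hnsq, Complex.normSq_sub]
      have : (((p i : ℝ) : ℂ) * z i * (starRingEnd ℂ) μ).re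
          = p i * (z i * (starRingEnd ℂ) μ).re := by
        rw [mul_assoc]
        simp [Complex.mul_re]
      rw [this]
      ring
    rw [Finset.sum_congr rfl fun i _ => hexp i]
    rw [Finset.sum_sub_distrib, Finset.sum_add_distrib, ← Finset.sum_mul, hpsum,
      ← Finset.mul_sum, ← Complex.re_sum]
    have hsum : (∑ i, ((p i : ℝ) : ℂ) * z i * (starRingEnd ℂ) μ) = μ * (starRingEnd ℂ) μ := by
      rw [← Finset.sum_mul, part1, hμdef]
    rw [hsum, Complex.mul_conj, Complex.ofReal_re]
    ring
  rw [hvar]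
  have hbound : (∑ i, p i * Complex.normSq (z i)) ≤ S * ∑ i, ‖y i‖ ^ 2 := by
    rw [Finset.mul_sum]
    apply Finset.sum_le_sum
    intro i _
    by_cases h : x i = 0
    · have h0 : p i * Complex.normSq (z i) = 0 := by
        rw [hp i, h]; simp
      rw [h0]; positivity
    · have hxi : (‖x i‖ : ℝ) ^ 2 ≠ 0 := pow_ne_zero 2 (norm_ne_zero_iff.mpr h)
      rw [hp i, hz i h]
      rw [Complex.normSq_mul, Complex.normSq_mul, Complex.normSq_div,
        Complex.normSq_conj]
      have h1 : Complex.normSq (x i) = ‖x i‖ ^ 2 := (hnsq _).symm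
      have h2 : Complex.normSq (y i) = ‖y i‖ ^ 2 := (hnsq _).symm
      have h3 : Complex.normSq ((S : ℂ)) = S ^ 2 := by
        rw [Complex.normSq_ofReal]; ring
      have h4 : Complex.normSq ((((‖x i‖ ^ 2 : ℝ)) : ℂ)) = (‖x i‖ ^ 2) ^ 2 := by
        rw [Complex.normSq_ofReal]; ring
      rw [h1, h2, h3, h4, aux_div _ _ _ hxi hSne]
  have hμnn : 0 ≤ Complex.normSq μ := Complex.normSq_nonneg μ
  linarith
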